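/- In the Battling Influencers Game with finite action space F, for every player i, every pair of actions S, S' ∈ 𝒟^{(k_i)} for player i, and every joint action of the others, the loss difference equals the potential difference: ℓ_i(S, S_{−i}) − ℓ_i(S', S_{−i}) = Φ(S, S_{−i}) − Φ(S', S_{−i}), where Φ({S_i}_{i=1}^n) = ‖w_0 x_0 + ∑_{i=1}^n w_i' x_i'‖₂² − 2 ∑_{i=1}^n w_i' ⟨t_i, x_i'⟩ with w_i' = w_i k_i and x_i' = (1/k_i) ∑_{v ∈ S_i} v. Hence F is an exact potential game. -/
import Mathlib


open scoped RealInnerProductSpace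

noncomputable section

/-- The receiver's point in the Battling Influencers Game with finite action
space: `x̂ = w_0 x_0 + ∑_{i=1}^n w_i ∑_{j=1}^{k_i} x_i^{(j)}`, where player `i`'s
action is the `k_i`-tuple `S i`. -/
def receiverF {d n : ℕ} (k : Fin n → ℕ) (w0 : ℝ) (x0 : EuclideanSpace ℝ (Fin d))
    (w : Fin n → ℝ) (S : (i : Fin n) → Fin (k i) → EuclideanSpace ℝ (Fin d)) :
    EuclideanSpace ℝ (Fin d) :=
  w0 • x0 + ∑ i, w i • ∑ j, S i j

/-- Player `i`'s loss: `ℓ_i = ‖x̂ − t_i‖₂²`. -/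
def lossF {d n : ℕ} (k : Fin n → ℕ) (w0 : ℝ) (x0 : EuclideanSpace ℝ (Fin d))
    (w : Fin n → ℝ) (t : Fin n → EuclideanSpace ℝ (Fin d)) (i : Fin n)
    (S : (i : Fin n) → Fin (k i) → EuclideanSpace ℝ (Fin d)) : ℝ :=
  ‖receiverF k w0 x0 w S - t i‖ ^ 2

/-- The potential for the finite-action game, expressed through the meta items
`w_i' = w_i k_i` and `x_i' = (1/k_i) ∑_{j=1}^{k_i} x_i^{(j)}`:
`Φ = ‖w_0 x_0 + ∑ w_i' x_i'‖₂² − 2 ∑ w_i' ⟨t_i, x_i'⟩`. -/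
def potentialF {d n : ℕ} (k : Fin n → ℕ) (w0 : ℝ) (x0 : EuclideanSpace ℝ (Fin d))
    (w : Fin n → ℝ) (t : Fin n → EuclideanSpace ℝ (Fin d))
    (S : (i : Fin n) → Fin (k i) → EuclideanSpace ℝ (Fin d)) : ℝ :=
  ‖w0 • x0 + ∑ i, (w i * (k i : ℝ)) • ((k i : ℝ)⁻¹ • ∑ j, S i j)‖ ^ 2 -
    2 * ∑ i, (w i * (k i : ℝ)) * ⟪t i, (k i : ℝ)⁻¹ • ∑ j, S i j⟫

/-- The Battling Influencers Game with finite action space is an exact potential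
game: for every player `i`, every pair of actions `S_i`, `S_i'` (tuples of `k_i`
elements of the finite set `𝒳`), and every joint action of the others, the loss
difference equals the potential difference. -/
theorem bigF_exact_potential {d n : ℕ} (X : Set (EuclideanSpace ℝ (Fin d)))
    (hXfin : X.Finite) (k : Fin n → ℕ) (hk : ∀ i, 1 ≤ k i)
    (w0 : ℝ) (x0 : EuclideanSpace ℝ (Fin d)) (w : Fin n → ℝ)
    (t : Fin n → EuclideanSpace ℝ (Fin d)) (i : Fin n)
    (S : (i : Fin n) → Fin (k i) → EuclideanSpace ℝ (Fin d))
    (hS : ∀ i' j, S i' j ∈ X)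
    (S' : Fin (k i) → EuclideanSpace ℝ (Fin d)) (hS' : ∀ j, S' j ∈ X) :
    lossF k w0 x0 w t i S - lossF k w0 x0 w t i (Function.update S i S')
      = potentialF k w0 x0 w t S
          - potentialF k w0 x0 w t (Function.update S i S') := by
  have hkne : ∀ i', ((k i' : ℝ)) ≠ 0 := fun i' =>
    Nat.cast_ne_zero.mpr (Nat.one_le_iff_ne_zero.mp (hk i'))
  -- simplify the potential
  have hpot : ∀ T : (i : Fin n) → Fin (k i) → EuclideanSpace ℝ (Fin d),
      potentialF k w0 x0 w t T =
        ‖receiverF k w0 x0 w T‖ ^ 2 - 2 * ∑ i', w i' * ⟪t i', ∑ j, T i' j⟫ := by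
    intro T
    have hc : ∀ i', w i' * (k i' : ℝ) * ((k i' : ℝ))⁻¹ = w i' := fun i' => by
      rw [mul_assoc, mul_inv_cancel₀ (hkne i'), mul_one]
    have hsum : ∀ i', (w i' * (k i' : ℝ)) • (((k i' : ℝ))⁻¹ • ∑ j, T i' j)
        = w i' • ∑ j, T i' j := fun i' => by rw [smul_smul, hc]
    have hip : ∀ i', (w i' * (k i' : ℝ)) * ⟪t i', ((k i' : ℝ))⁻¹ • ∑ j, T i' j⟫
        = w i' * ⟪t i', ∑ j, T i' j⟫ := fun i' => by
      rw [real_inner_smul_right, ← mul_assoc, hc]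
    unfold potentialF receiverF
    simp only [hsum, hip]
  have hupd : ∀ i', i' ≠ i → (Function.update S i S' i') = S i' := fun i' h =>
    Function.update_of_ne h _ _
  set r := receiverF k w0 x0 w S with hr
  set r' := receiverF k w0 x0 w (Function.update S i S') with hr'
  have key1 : r' = r - w i • ∑ j, S i j + w i • ∑ j, S' j := by
    rw [hr, hr']
    unfold receiverF
    have : (fun i' => w i' • ∑ j, Function.update S i S' i' j)
        = Function.update (fun i' => w i' • ∑ j, S i' j) i (w i • ∑ j, S' j) := by
      funext i'
      exact Function.apply_update (fun i' s => w i' • ∑ j, s j) S i S' i'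
    rw [this, Finset.sum_update_of_mem (Finset.mem_univ i),
      Finset.sum_eq_add_sum_sdiff_singleton_of_mem (Finset.mem_univ i)
        (fun i' => w i' • ∑ j, S i' j)]
    abel
  have key2 : ∑ i', w i' * ⟪t i', ∑ j, Function.update S i S' i' j⟫
      = (∑ i', w i' * ⟪t i', ∑ j, S i' j⟫) - w i * ⟪t i, ∑ j, S i j⟫
        + w i * ⟪t i, ∑ j, S' j⟫ := by
    have : (fun i' => w i' * ⟪t i', ∑ j, Function.update S i S' i' j⟫)
        = Function.update (fun i' => w i' * ⟪t i', ∑ j, S i' j⟫) i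
            (w i * ⟪t i, ∑ j, S' j⟫) := by
      funext i'
      exact Function.apply_update (fun i' s => w i' * ⟪t i', ∑ j, s j⟫) S i S' i'
    rw [this, Finset.sum_update_of_mem (Finset.mem_univ i),
      Finset.sum_eq_add_sum_sdiff_singleton_of_mem (Finset.mem_univ i)
        (fun i' => w i' * ⟪t i', ∑ j, S i' j⟫)]
    ring
  unfold lossF
  rw [hpot, hpot, ← hr, ← hr']
  rw [norm_sub_sq_real r (t i), norm_sub_sq_real r' (t i), key2, key1]
  have hinner : ⟪r - w i • ∑ j, S i j + w i • ∑ j, S' j, t i⟫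
      = ⟪r, t i⟫ - w i * ⟪∑ j, S i j, t i⟫ + w i * ⟪∑ j, S' j, t i⟫ := by
    rw [inner_add_left, inner_sub_left, real_inner_smul_left, real_inner_smul_left]
  rw [hinner, real_inner_comm (∑ j, S i j) (t i), real_inner_comm (∑ j, S' j) (t i)]
  ring
end
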